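/- arXiv:2004.01490 — 2 statements merged into one kernel-verified Lean document; each statement's English description precedes it below -/
import Mathlib

section
/- For all real α, β ≠ 0, γ, x, λ ∈ ℕ with λ ≥ 1, and n ≥ 0: A^{λ,x}_{n+1}(α,β,γ-α) - (x+1)·λ·β · A^{λ+1,x}_n(α,β,γ) = (γ - α - λβ) · A^{λ,x}_n(α,β,γ). -/
open Finset

/-- Generalized factorial polynomial `(t|α)_n = ∏_{j=0}^{n-1} (t - jα)`. -/
noncomputable def gfact (t α : ℝ) (n : ℕ) : ℝ := ∏ j ∈ Finset.range n, (t - j * α)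

/-- Hsu–Shiue generalized Stirling numbers (explicit formula, β ≠ 0). -/
noncomputable def HS (n k : ℕ) (α β γ : ℝ) : ℝ :=
  (1 / (β ^ k * (Nat.factorial k : ℝ))) *
    ∑ s ∈ Finset.range (k + 1), (-1 : ℝ) ^ (k - s) * (Nat.choose k s : ℝ) * gfact (β * s + γ) α n

/-- Second-type higher order generalized geometric polynomials. -/
noncomputable def A (lam : ℕ) (x : ℝ) (n : ℕ) (α β γ : ℝ) : ℝ :=
  ∑ k ∈ Finset.range (n + 1),
    (Nat.choose (k + lam - 1) k : ℝ) * (-1 : ℝ) ^ (n + k) * β ^ k * (Nat.factorial k : ℝ) *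
      HS n k α (-β) (-γ) * x ^ k

noncomputable def Dop (f : ℕ → ℝ) (k : ℕ) : ℝ :=
  ∑ s ∈ Finset.range (k+1), (-1:ℝ)^(k-s) * (Nat.choose k s : ℝ) * f s

lemma Dop_succ (f : ℕ → ℝ) (k : ℕ) :
    Dop f (k+1) = Dop (fun s => f (s+1)) k - Dop f k := by
  unfold Dop
  rw [Finset.sum_range_succ' (fun s => (-1:ℝ)^(k+1-s) * (Nat.choose (k+1) s : ℝ) * f s) (k+1)]
  rw [Finset.sum_range_succ' (fun s => (-1:ℝ)^(k-s) * (Nat.choose k s : ℝ) * f s) k]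
  simp only [Nat.choose_succ_succ, Nat.cast_add, Nat.succ_sub_succ]
  have e1 : ∀ x ∈ Finset.range (k+1),
      (-1:ℝ)^(k-x) * ((Nat.choose k x : ℝ) + (Nat.choose k (x+1):ℝ)) * f (x+1)
      = (-1:ℝ)^(k-x) * (Nat.choose k x : ℝ) * f (x+1)
        + (-1:ℝ)^(k-x) * (Nat.choose k (x+1):ℝ) * f (x+1) := by
    intro x _; ring
  rw [Finset.sum_congr rfl e1, Finset.sum_add_distrib]
  have e2 : ∑ x ∈ Finset.range (k+1), (-1:ℝ)^(k-x) * (Nat.choose k (x+1):ℝ) * f (x+1)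
      = -∑ t ∈ Finset.range k, (-1:ℝ)^(k-(t+1)) * (Nat.choose k (t+1):ℝ) * f (t+1) := by
    rw [Finset.sum_range_succ]
    simp only [Nat.choose_succ_self, Nat.cast_zero, zero_mul, mul_zero, add_zero]
    rw [← Finset.sum_neg_distrib]
    apply Finset.sum_congr rfl
    intro t ht
    have : k - t = (k - (t+1)) + 1 := by
      simp only [Finset.mem_range] at ht; omega
    rw [this, pow_succ]
    ring
  rw [e2]
  have e3 : (k + 1 - 0) = k - 0 + 1 := by omega
  rw [e3, pow_succ]
  simp only [Nat.choose_zero_right, Nat.cast_one]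
  ring

lemma Dop_poly_zero (k : ℕ) : ∀ (p : Polynomial ℝ), p.degree < k →
    Dop (fun s => p.eval (s : ℝ)) k = 0 := by
  induction k with
  | zero =>
    intro p hp
    have : p = 0 := by
      by_contra h
      rw [Polynomial.degree_eq_natDegree h] at hp
      exact (Nat.cast_lt.mp (by exact_mod_cast hp)).not_ge (Nat.zero_le _)
    simp [Dop, this]
  | succ k ih =>
    intro p hp
    rw [Dop_succ]
    by_cases h0 : p = 0
    · simp [Dop, h0]
    have hdeg : p.degree ≤ k := Order.le_of_lt_succ (by exact_mod_cast hp)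
    set q : Polynomial ℝ := p.comp (Polynomial.X + Polynomial.C 1) with hq
    have hq0 : q ≠ 0 := by
      intro hc
      apply h0
      have : q.comp (Polynomial.X - Polynomial.C 1) = p := by
        rw [hq, Polynomial.comp_assoc]
        simp
      rw [hc] at this
      simpa using this.symm
    have hcomp : ∀ s : ℕ, q.eval (s:ℝ) = p.eval ((s:ℝ)+1) := by
      intro s; simp [hq, Polynomial.eval_comp]
    have hnd : q.natDegree = p.natDegree := by
      rw [hq, Polynomial.natDegree_comp, Polynomial.natDegree_X_add_C, mul_one]
    have h1 : q.degree = p.degree := by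
      rw [Polynomial.degree_eq_natDegree h0, Polynomial.degree_eq_natDegree hq0, hnd]
    have hqd : (q - p).degree < (k:WithBot ℕ) := by
      have hlt : (q - p).degree < q.degree := by
        apply Polynomial.degree_sub_lt h1 hq0
        rw [hq, Polynomial.leadingCoeff_comp (by rw [Polynomial.natDegree_X_add_C]; exact one_ne_zero)]
        rw [(Polynomial.monic_X_add_C (1:ℝ)).leadingCoeff]
        simp
      rw [h1] at hlt
      exact lt_of_lt_of_le hlt hdeg
    have heq : Dop (fun s : ℕ => p.eval (((s+1:ℕ)):ℝ)) k - Dop (fun s : ℕ => p.eval (s:ℝ)) k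
        = Dop (fun s : ℕ => (q-p).eval (s:ℝ)) k := by
      unfold Dop
      rw [← Finset.sum_sub_distrib]
      apply Finset.sum_congr rfl
      intro s _
      have := hcomp s
      push_cast
      rw [Polynomial.eval_sub]
      push_cast at this
      rw [this]
      ring
    rw [heq, ih (q-p) hqd]

lemma Dop_prod_zero (β γ α : ℝ) (n : ℕ) :
    Dop (fun s : ℕ => ∏ j ∈ Finset.range n, (β*s + (γ + j*α))) (n+1) = 0 := by
  set p : Polynomial ℝ := ∏ j ∈ Finset.range n, (Polynomial.C β * Polynomial.X + Polynomial.C (γ + j*α)) with hp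
  have hev : ∀ s : ℕ, p.eval (s:ℝ) = ∏ j ∈ Finset.range n, (β*s + (γ + j*α)) := by
    intro s
    rw [hp, Polynomial.eval_prod]
    apply Finset.prod_congr rfl
    intro j _
    simp
  have hdeg : p.degree < ((n+1 : ℕ) : WithBot ℕ) := by
    have h1 : p.natDegree ≤ n := by
      have h2 : ∀ j ∈ Finset.range n,
          (Polynomial.C β * Polynomial.X + Polynomial.C (γ + j*α)).natDegree ≤ 1 :=
        fun j _ => Polynomial.natDegree_linear_le
      refine le_trans (Polynomial.natDegree_prod_le _ _)
        (le_trans (Finset.sum_le_sum h2) (by simp))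
    refine lt_of_le_of_lt (Polynomial.degree_le_natDegree) ?_
    exact_mod_cast Nat.lt_succ_of_le h1
  have := Dop_poly_zero (n+1) p hdeg
  rw [← this]
  unfold Dop
  apply Finset.sum_congr rfl
  intro s _
  simp only []
  rw [hev s]

lemma A_eq (lam : ℕ) (x : ℝ) (m : ℕ) (α β γ' : ℝ) (hβ : β ≠ 0) :
    A lam x m α β γ' = ∑ k ∈ Finset.range (m+1),
      (Nat.choose (k + lam - 1) k : ℝ) * x^k *
        Dop (fun s : ℕ => ∏ j ∈ Finset.range m, (β*s + (γ' + j*α))) k := by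
  unfold A
  apply Finset.sum_congr rfl
  intro k _
  set D := Dop (fun s : ℕ => ∏ j ∈ Finset.range m, (β*s + (γ' + j*α))) k with hD
  have hHS : HS m k α (-β) (-γ') = (1 / ((-β) ^ k * (Nat.factorial k : ℝ))) *
      ((-1:ℝ)^m * D) := by
    unfold HS
    congr 1
    rw [hD]
    unfold Dop
    rw [Finset.mul_sum]
    apply Finset.sum_congr rfl
    intro s _
    have hg : gfact ((-β) * s + -γ') α m
        = (-1:ℝ)^m * ∏ j ∈ Finset.range m, (β*s + (γ' + j*α)) := by
      unfold gfact
      have : ∀ j ∈ Finset.range m, (-β) * s + -γ' - j*α = (-1) * (β*s + (γ' + j*α)) := by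
        intro j _; ring
      rw [Finset.prod_congr rfl this, Finset.prod_mul_distrib, Finset.prod_const, Finset.card_range]
    rw [hg]
    ring
  rw [hHS, neg_pow β k, pow_add]
  have hm2 : ((-1:ℝ)^m) * ((-1:ℝ)^m) = 1 := by
    rw [← pow_add, ← two_mul, pow_mul]; norm_num
  have hk2 : ((-1:ℝ)^k) * ((-1:ℝ)^k) = 1 := by
    rw [← pow_add, ← two_mul, pow_mul]; norm_num
  have hb : β ^ k ≠ 0 := pow_ne_zero _ hβ
  have hf : ((Nat.factorial k : ℝ)) ≠ 0 := Nat.cast_ne_zero.mpr (Nat.factorial_ne_zero k)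
  field_simp
  ring_nf
  rw [pow_mul', neg_one_sq, one_pow, mul_one]

lemma Dop_shift (P : ℕ → ℝ) (lam : ℕ) (k : ℕ) :
    Dop (fun s => ((s:ℝ) + lam) * P s) k
      = ((lam:ℝ) + k) * Dop P k + (k:ℝ) * Dop P (k-1) := by
  cases k with
  | zero => simp [Dop]
  | succ m =>
    have h1 : Dop (fun s => ((s:ℝ) + lam) * P s) (m+1)
        = (lam:ℝ) * Dop P (m+1)
          + ∑ s ∈ Finset.range (m+2), (-1:ℝ)^(m+1-s) * (Nat.choose (m+1) s : ℝ) * ((s:ℝ) * P s) := by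
      unfold Dop
      rw [Finset.mul_sum, ← Finset.sum_add_distrib]
      apply Finset.sum_congr rfl
      intro s _
      ring
    have h2 : ∑ s ∈ Finset.range (m+2), (-1:ℝ)^(m+1-s) * (Nat.choose (m+1) s : ℝ) * ((s:ℝ) * P s)
        = ((m:ℝ)+1) * Dop (fun s => P (s+1)) m := by
      rw [Finset.sum_range_succ' (fun s => (-1:ℝ)^(m+1-s) * (Nat.choose (m+1) s : ℝ) * ((s:ℝ) * P s)) (m+1)]
      simp only [Nat.cast_zero, zero_mul, mul_zero, add_zero]
      unfold Dop
      rw [Finset.mul_sum]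
      apply Finset.sum_congr rfl
      intro t _
      have hc : ((m:ℝ)+1) * (Nat.choose m t : ℝ) = (Nat.choose (m+1) (t+1) : ℝ) * ((t:ℝ)+1) := by
        exact_mod_cast congrArg (Nat.cast (R := ℝ)) (Nat.add_one_mul_choose_eq m t)
      have he : m+1-(t+1) = m - t := by omega
      rw [he]
      push_cast
      linear_combination (-(-1:ℝ)^(m-t) * P (t+1)) * hc
    rw [h1, h2, Dop_succ P m]
    have : (m+1) - 1 = m := by omega
    rw [this]
    push_cast
    ring

lemma choose_a (lam k : ℕ) (hlam : 1 ≤ lam) :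
    ((lam:ℝ) + k) * (Nat.choose (k+lam-1) k : ℝ) = (lam:ℝ) * (Nat.choose (k+lam) k : ℝ) := by
  have h1 := Nat.add_one_mul_choose_eq (k+lam-1) k
  have e : k+lam-1+1 = k+lam := by omega
  rw [e] at h1
  have h2 := Nat.choose_succ_right_eq (k+lam) k
  have e2 : k+lam-k = lam := by omega
  rw [e2] at h2
  have : (lam + k) * Nat.choose (k+lam-1) k = lam * Nat.choose (k+lam) k := by
    rw [Nat.add_comm lam k, h1, h2]; ring
  exact_mod_cast congrArg (Nat.cast (R := ℝ)) this

lemma choose_b (lam k : ℕ) (hlam : 1 ≤ lam) :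
    ((k:ℝ) + 1) * (Nat.choose (k+1+lam-1) (k+1) : ℝ) = (lam:ℝ) * (Nat.choose (k+lam) k : ℝ) := by
  have e : k+1+lam-1 = k+lam := by omega
  rw [e]
  have h2 := Nat.choose_succ_right_eq (k+lam) k
  have e2 : k+lam-k = lam := by omega
  rw [e2] at h2
  have : (k+1) * Nat.choose (k+lam) (k+1) = lam * Nat.choose (k+lam) k := by
    rw [mul_comm, h2]; ring
  exact_mod_cast congrArg (Nat.cast (R := ℝ)) this

theorem stmt4 (α β γ x : ℝ) (hβ : β ≠ 0) (lam : ℕ) (hlam : 1 ≤ lam) (n : ℕ) :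
    A lam x (n + 1) α β (γ - α) - (x + 1) * lam * β * A (lam + 1) x n α β γ =
      (γ - α - lam * β) * A lam x n α β γ := by
  rw [A_eq lam x (n+1) α β (γ-α) hβ, A_eq (lam+1) x n α β γ hβ, A_eq lam x n α β γ hβ]
  set P : ℕ → ℝ := fun s : ℕ => ∏ j ∈ Finset.range n, (β*(s:ℝ) + (γ + (j:ℝ)*α)) with hP
  have hmid : ∀ k : ℕ, k + (lam+1) - 1 = k + lam := fun k => by omega
  simp only [hmid]
  set S2 : ℝ := ∑ k ∈ Finset.range (n+1), (Nat.choose (k+lam) k : ℝ) * x^k * Dop P k with hS2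
  set S3 : ℝ := ∑ k ∈ Finset.range (n+1), (Nat.choose (k+lam-1) k : ℝ) * x^k * Dop P k with hS3
  have hQ : (fun s : ℕ => ∏ j ∈ Finset.range (n+1), (β*(s:ℝ) + ((γ-α) + (j:ℝ)*α)))
      = fun s : ℕ => (β*(s:ℝ) + (γ-α)) * P s := by
    funext s
    rw [Finset.prod_range_succ']
    have h1 : ∀ j ∈ Finset.range n,
        (β*(s:ℝ) + ((γ-α) + ((j+1:ℕ):ℝ)*α)) = β*(s:ℝ) + (γ + (j:ℝ)*α) := by
      intro j _; push_cast; ring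
    rw [Finset.prod_congr rfl h1, hP]
    push_cast
    ring
  rw [hQ]
  have hb0 : Dop P (n+1) = 0 := Dop_prod_zero β γ α n
  have hsplit : ∀ k, Dop (fun s : ℕ => (β*(s:ℝ) + (γ-α)) * P s) k
      = β * (((lam:ℝ)+k) * Dop P k) + β * ((k:ℝ) * Dop P (k-1))
        + (γ-α-(lam:ℝ)*β) * Dop P k := by
    intro k
    have := Dop_shift P lam k
    have hlin : Dop (fun s : ℕ => (β*(s:ℝ) + (γ-α)) * P s) k
        = β * Dop (fun s => ((s:ℝ) + lam) * P s) k + (γ-α-(lam:ℝ)*β) * Dop P k := by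
      unfold Dop
      rw [Finset.mul_sum, Finset.mul_sum, ← Finset.sum_add_distrib]
      apply Finset.sum_congr rfl
      intro s _
      push_cast
      ring
    rw [hlin, this]
    ring
  have e1 : ∑ k ∈ Finset.range (n+1+1), (Nat.choose (k+lam-1) k : ℝ) * x^k *
        Dop (fun s : ℕ => (β*(s:ℝ) + (γ-α)) * P s) k
      = (∑ k ∈ Finset.range (n+2), β * ((Nat.choose (k+lam-1) k : ℝ) * x^k * (((lam:ℝ)+k) * Dop P k)))
        + (∑ k ∈ Finset.range (n+2), β * ((Nat.choose (k+lam-1) k : ℝ) * x^k * ((k:ℝ) * Dop P (k-1))))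
        + (∑ k ∈ Finset.range (n+2), (γ-α-(lam:ℝ)*β) * ((Nat.choose (k+lam-1) k : ℝ) * x^k * Dop P k)) := by
    rw [← Finset.sum_add_distrib, ← Finset.sum_add_distrib]
    apply Finset.sum_congr rfl
    intro k _
    rw [hsplit k]
    ring
  rw [e1]
  have h1 : ∑ k ∈ Finset.range (n+2), β * ((Nat.choose (k+lam-1) k : ℝ) * x^k * (((lam:ℝ)+k) * Dop P k))
      = β * ((lam:ℝ) * S2) := by
    have : ∀ k ∈ Finset.range (n+2),
        β * ((Nat.choose (k+lam-1) k : ℝ) * x^k * (((lam:ℝ)+k) * Dop P k))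
        = β * (lam:ℝ) * ((Nat.choose (k+lam) k : ℝ) * x^k * Dop P k) := by
      intro k _
      have := choose_a lam k hlam
      linear_combination (β * x^k * Dop P k) * this
    rw [Finset.sum_congr rfl this, ← Finset.mul_sum, Finset.sum_range_succ, hb0, hS2]
    ring
  have h2 : ∑ k ∈ Finset.range (n+2), β * ((Nat.choose (k+lam-1) k : ℝ) * x^k * ((k:ℝ) * Dop P (k-1)))
      = β * ((lam:ℝ) * x * S2) := by
    rw [Finset.sum_range_succ' (fun k => β * ((Nat.choose (k+lam-1) k : ℝ) * x^k * ((k:ℝ) * Dop P (k-1)))) (n+1)]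
    simp only [Nat.cast_zero, zero_mul, mul_zero, add_zero]
    have : ∀ t ∈ Finset.range (n+1),
        β * ((Nat.choose (t+1+lam-1) (t+1) : ℝ) * x^(t+1) * (((t+1:ℕ):ℝ) * Dop P (t+1-1)))
        = β * (lam:ℝ) * x * ((Nat.choose (t+lam) t : ℝ) * x^t * Dop P t) := by
      intro t _
      have hcb := choose_b lam t hlam
      have ht : t+1-1 = t := by omega
      rw [ht]
      push_cast
      linear_combination (β * x^(t+1) * Dop P t) * hcb
    rw [Finset.sum_congr rfl this, ← Finset.mul_sum, hS2]
    ring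
  have h3 : ∑ k ∈ Finset.range (n+2), (γ-α-(lam:ℝ)*β) * ((Nat.choose (k+lam-1) k : ℝ) * x^k * Dop P k)
      = (γ-α-(lam:ℝ)*β) * S3 := by
    rw [← Finset.mul_sum, Finset.sum_range_succ, hb0, hS3]
    ring
  rw [h1, h2, h3]
  ring
end

section
/- For all real α, β ≠ 0, γ, x, all λ ∈ ℕ with λ ≥ 1, and all n ≥ 0: A^{λ,x}_n(α,β,γ) = Σ_{k=0}^{n} C(k+λ-1,k) · Σ_{i=0}^{n} C(n,i) · x^k · (-1)^{k+i} · β^k · k! · S(i,k;α,-β,0) · (γ|-α)_{n-i}, where S(i,k;α,-β,0) = 0 when k > i. -/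
open Finset

lemma gfact_succ (t α : ℝ) (n : ℕ) : gfact t α (n+1) = gfact t α n * (t - n * α) := by
  simp [gfact, Finset.prod_range_succ]

lemma gfact_neg (γ α : ℝ) (m : ℕ) : gfact (-γ) α m = (-1)^m * gfact γ (-α) m := by
  induction m with
  | zero => simp [gfact]
  | succ m ih => rw [gfact_succ, gfact_succ, ih]; ring

lemma gfact_vandermonde (t u α : ℝ) (n : ℕ) :
    gfact (t + u) α n =
      ∑ i ∈ Finset.range (n+1), (n.choose i : ℝ) * gfact t α i * gfact u α (n - i) := by
  induction n with
  | zero => simp [gfact]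
  | succ n ih =>
    rw [gfact_succ, ih, Finset.sum_mul]
    have step : ∀ i ∈ Finset.range (n+1),
        (n.choose i : ℝ) * gfact t α i * gfact u α (n - i) * (t + u - n * α)
        = (n.choose i : ℝ) * gfact t α (i+1) * gfact u α (n+1-i-1)
          + (n.choose i : ℝ) * gfact t α i * gfact u α (n + 1 - i) := by
      intro i hi
      rw [Finset.mem_range, Nat.lt_succ_iff] at hi
      have hn : (n : ℝ) = (i : ℝ) + ((n - i : ℕ) : ℝ) := by
        exact_mod_cast (Nat.add_sub_cancel' hi).symm
      have h1 : n + 1 - i - 1 = n - i := by omega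
      have h2 : n + 1 - i = (n - i) + 1 := by omega
      rw [h1, h2, gfact_succ, gfact_succ, hn]
      ring
    rw [Finset.sum_congr rfl step, Finset.sum_add_distrib]
    conv_rhs => rw [Finset.sum_range_succ']
    have h3 : ∀ i ∈ Finset.range (n+1),
        ((n+1).choose (i+1) : ℝ) * gfact t α (i+1) * gfact u α (n+1-(i+1))
        = (n.choose i : ℝ) * gfact t α (i+1) * gfact u α (n+1-i-1)
          + (n.choose (i+1) : ℝ) * gfact t α (i+1) * gfact u α (n+1-i-1) := by
      intro i hi
      have : n + 1 - (i+1) = n + 1 - i - 1 := by omega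
      rw [this, Nat.choose_succ_succ]
      push_cast
      ring
    rw [Finset.sum_congr rfl h3, Finset.sum_add_distrib]
    rw [show (∑ i ∈ Finset.range (n+1), (n.choose i : ℝ) * gfact t α i * gfact u α (n + 1 - i))
        = (∑ i ∈ Finset.range n, (n.choose (i+1) : ℝ) * gfact t α (i+1) * gfact u α (n + 1 - (i+1)))
          + (n.choose 0 : ℝ) * gfact t α 0 * gfact u α (n+1) from Finset.sum_range_succ' _ n]
    rw [show (∑ i ∈ Finset.range (n+1), (n.choose (i+1) : ℝ) * gfact t α (i+1) * gfact u α (n+1-i-1))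
        = (∑ i ∈ Finset.range n, (n.choose (i+1) : ℝ) * gfact t α (i+1) * gfact u α (n+1-i-1))
          + (n.choose (n+1) : ℝ) * gfact t α (n+1) * gfact u α (n+1-n-1) from Finset.sum_range_succ _ n]
    have hz : (n.choose (n+1) : ℝ) = 0 := by simp
    have he : ∀ i ∈ Finset.range n, (n.choose (i+1) : ℝ) * gfact t α (i+1) * gfact u α (n + 1 - (i+1))
        = (n.choose (i+1) : ℝ) * gfact t α (i+1) * gfact u α (n+1-i-1) := by
      intro i hi
      congr 2
    rw [Finset.sum_congr rfl he, hz]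
    simp
    ring

lemma HS_expand (n k : ℕ) (α β γ : ℝ) :
    HS n k α (-β) (-γ)
      = ∑ i ∈ Finset.range (n+1),
          (n.choose i : ℝ) * (-1 : ℝ)^(n-i) * HS i k α (-β) 0 * gfact γ (-α) (n - i) := by
  unfold HS
  have h1 : ∀ s : ℕ, gfact (-β * s + -γ) α n
      = ∑ i ∈ Finset.range (n+1),
          (n.choose i : ℝ) * gfact (-β * s + 0) α i * ((-1 : ℝ)^(n-i) * gfact γ (-α) (n-i)) := by
    intro s
    have hrw : -β * (s:ℝ) + -γ = (-β * s + 0) + (-γ) := by ring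
    rw [hrw, gfact_vandermonde]
    refine Finset.sum_congr rfl fun i _ => ?_
    rw [gfact_neg]
  simp only [h1, Finset.mul_sum, Finset.sum_mul]
  rw [Finset.sum_comm]
  exact Finset.sum_congr rfl fun i _ => Finset.sum_congr rfl fun s _ => by ring

theorem stmt9 (α β γ x : ℝ) (hβ : β ≠ 0) (lam : ℕ) (hlam : 1 ≤ lam) (n : ℕ) :
    A lam x n α β γ =
      ∑ k ∈ Finset.range (n + 1), (Nat.choose (k + lam - 1) k : ℝ) *
        ∑ i ∈ Finset.range (n + 1),
          (Nat.choose n i : ℝ) * x ^ k * (-1 : ℝ) ^ (k + i) * β ^ k * (Nat.factorial k : ℝ) *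
            HS i k α (-β) 0 * gfact γ (-α) (n - i) := by
  unfold A
  refine Finset.sum_congr rfl fun k _ => ?_
  rw [HS_expand, Finset.mul_sum, Finset.sum_mul]
  conv_rhs => rw [Finset.mul_sum]
  refine Finset.sum_congr rfl fun i hi => ?_
  rw [Finset.mem_range, Nat.lt_succ_iff] at hi
  have hsign : (-1 : ℝ)^(n+k) * (-1 : ℝ)^(n-i) = (-1 : ℝ)^(k+i) := by
    rw [← pow_add]
    have h2 : (n+k) + (n-i) = k + i + 2*(n-i) := by omega
    rw [h2, pow_add, pow_mul]
    norm_num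
  linear_combination ((Nat.choose (k+lam-1) k : ℝ) * (n.choose i : ℝ) * HS i k α (-β) 0 *
    gfact γ (-α) (n-i) * β^k * (Nat.factorial k : ℝ) * x^k) * hsign
end
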